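/- Suppose x, y in (0,1), and normalized confusion matrices for two groups satisfy demographic parity (TPa+FPa = TPb+FPb), equal opportunity (TPa·(1-y) = TPb·(1-x)), and false positive parity (FPa·y = FPb·x). Then either x = y, or all of the following hold: FPb = (y/(1-y))·TPb, FPa = (x/(1-y))·TPb, and TPa = ((1-x)/(1-y))·TPb. -/

import Mathlib

theorem stmt
    (x y TPa FNa TNa FPa TPb FNb TNb FPb : ℝ)
    (hx0 : 0 < x) (hx1 : x < 1) (hy0 : 0 < y) (hy1 : y < 1)
    (hTPa : 0 ≤ TPa) (hFNa : 0 ≤ FNa) (hTNa : 0 ≤ TNa) (hFPa : 0 ≤ FPa)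
    (hTPb : 0 ≤ TPb) (hFNb : 0 ≤ FNb) (hTNb : 0 ≤ TNb) (hFPb : 0 ≤ FPb)
    (hra : TPa + FNa = 1 - x) (hra' : TNa + FPa = x)
    (hrb : TPb + FNb = 1 - y) (hrb' : TNb + FPb = y)
    (hdp : TPa + FPa = TPb + FPb)
    (heo : TPa * (1 - y) = TPb * (1 - x))
    (hfpp : FPa * y = FPb * x)
    : x = y ∨ (FPb = (y / (1 - y)) * TPb ∧ FPa = (x / (1 - y)) * TPb ∧ TPa = ((1 - x) / (1 - y)) * TPb) := by
  by_cases hxy : x = y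
  · exact Or.inl hxy
  · right
    have hy1' : (1 : ℝ) - y ≠ 0 := by linarith
    have hy' : y ≠ 0 := ne_of_gt hy0
    have hne : x - y ≠ 0 := sub_ne_zero.mpr hxy
    have key : FPb = (y / (1 - y)) * TPb := by
      have h : (y - x) * (FPb * (1 - y) - y * TPb) = 0 := by
        linear_combination y * heo + (1 - y) * hfpp - y * (1 - y) * hdp
      have h2 : FPb * (1 - y) = y * TPb := by
        have := mul_eq_zero.mp h
        rcases this with h3 | h3
        · exact absurd (by linarith : x = y) hxy
        · linarith
      field_simp
      linarith
    refine ⟨key, ?_, ?_⟩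
    · have : FPa = FPb * x / y := by field_simp at hfpp ⊢; linarith
      rw [this, key]; field_simp
    · have : TPa = TPb * (1 - x) / (1 - y) := by
        field_simp; linarith
      rw [this]; field_simp
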